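/- Let N ≥ 1 and let Λ ⊂ ℕ^N be a finite, nonempty, downward-closed (lower) set with M := #Λ. Then ∑_{ν ∈ Λ} 2^{#{n : ν_n ≥ 1}} ≤ min( M^{log 3 / log 2}, 2^N · M ). (The left-hand side is Z(Λ) = ∑_{ν∈Λ} ‖T_ν‖_{L^∞}² for the L²-normalized tensor-product Chebyshev polynomials, since ‖T_ν‖_{L^∞}² = ∏_n w(ν_n) with w(0)=1 and w(k)=2 for k ≥ 1.) -/

import Mathlib

open Real Finset

noncomputable def stmt4β : ℝ := Real.log 3 / Real.log 2

lemma stmt4β_gt_one : 1 < stmt4β := by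
  rw [stmt4β, lt_div_iff₀ (Real.log_pos (by norm_num)), one_mul]
  exact Real.log_lt_log (by norm_num) (by norm_num)

lemma stmt4β_pos : 0 < stmt4β := lt_trans one_pos stmt4β_gt_one

lemma two_rpow_stmt4β : (2 : ℝ) ^ stmt4β = 3 := by
  rw [stmt4β, Real.rpow_def_of_pos (by norm_num)]
  rw [mul_div_assoc', mul_comm, mul_div_assoc, div_self (ne_of_gt (Real.log_pos (by norm_num))), mul_one]
  exact Real.exp_log (by norm_num)

/-- φ(t) = (t+1)^β - t^β is monotone on [1,∞). -/
lemma stmt4_phi_mono : MonotoneOn (fun t : ℝ => (t+1) ^ stmt4β - t ^ stmt4β) (Set.Ici 1) := by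
  have hcont : ContinuousOn (fun t : ℝ => (t+1) ^ stmt4β - t ^ stmt4β) (Set.Ici 1) := by
    apply ContinuousOn.sub
    · exact (continuousOn_id.add continuousOn_const).rpow_const
        (fun x hx => Or.inl (by simp only [Set.mem_Ici] at hx; intro h; simp only [Pi.add_apply, id_eq] at h; linarith))
    · exact continuousOn_id.rpow_const (fun x hx => Or.inl (by simp only [Set.mem_Ici] at hx; intro h; simp only [id_eq] at h; linarith))
  apply StrictMonoOn.monotoneOn
  apply strictMonoOn_of_deriv_pos (convex_Ici 1) hcont
  intro t ht
  rw [interior_Ici] at ht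
  have ht1 : (1:ℝ) < t := ht
  have ht0 : (0:ℝ) < t := by linarith
  have h1 : HasDerivAt (fun t : ℝ => (t+1) ^ stmt4β) (stmt4β * (t+1) ^ (stmt4β - 1) * 1) t := by
    exact (Real.hasDerivAt_rpow_const (Or.inl (by positivity))).comp t
      ((hasDerivAt_id t).add_const 1)
  have h2 : HasDerivAt (fun t : ℝ => t ^ stmt4β) (stmt4β * t ^ (stmt4β - 1)) t :=
    Real.hasDerivAt_rpow_const (Or.inl (ne_of_gt ht0))
  rw [show (fun t : ℝ => (t+1) ^ stmt4β - t ^ stmt4β) = ((fun t : ℝ => (t+1) ^ stmt4β) - fun t => t ^ stmt4β) from rfl, (h1.sub h2).deriv]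
  rw [mul_one]
  have : t ^ (stmt4β - 1) < (t+1) ^ (stmt4β - 1) :=
    Real.rpow_lt_rpow (le_of_lt ht0) (by linarith) (by linarith [stmt4β_gt_one])
  have := stmt4β_pos
  nlinarith

lemma stmt4_phi : ∀ t : ℝ, 1 ≤ t → t ^ stmt4β + 2 ≤ (t+1) ^ stmt4β := by
  intro t ht
  have := stmt4_phi_mono (Set.mem_Ici.mpr le_rfl) (Set.mem_Ici.mpr ht) ht
  simp only at this
  have h1 : ((1:ℝ)+1) ^ stmt4β - 1 ^ stmt4β = 2 := by
    rw [Real.one_rpow]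
    norm_num [two_rpow_stmt4β]
  linarith

/-- Key inequality: for 0 ≤ b ≤ a, a^β + 2 b^β ≤ (a+b)^β. -/
lemma stmt4_key {a b : ℝ} (hb : 0 ≤ b) (hba : b ≤ a) :
    a ^ stmt4β + 2 * b ^ stmt4β ≤ (a + b) ^ stmt4β := by
  rcases hb.eq_or_lt with h | hb0
  · rw [← h, Real.zero_rpow (ne_of_gt stmt4β_pos)]
    simp
  · have ha : 0 < a := lt_of_lt_of_le hb0 hba
    have ht : 1 ≤ a / b := (one_le_div hb0).mpr hba
    have key := stmt4_phi (a/b) ht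
    have e1 : a ^ stmt4β = b ^ stmt4β * (a/b) ^ stmt4β := by
      rw [← Real.mul_rpow (le_of_lt hb0) (by positivity)]
      congr 1
      field_simp
    have e2 : (a + b) ^ stmt4β = b ^ stmt4β * (a/b + 1) ^ stmt4β := by
      rw [← Real.mul_rpow (le_of_lt hb0) (by positivity)]
      congr 1
      field_simp
    rw [e1, e2]
    have hbpow : 0 < b ^ stmt4β := Real.rpow_pos_of_pos hb0 _
    nlinarith

lemma stmt4_agg (M : ℕ → ℝ) (h0 : ∀ k, 0 ≤ M k) (hle : ∀ k, M k ≤ M 0) (K : ℕ) :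
    (∑ k ∈ Finset.range (K+1), (if k = 0 then 1 else 2) * M k ^ stmt4β)
      ≤ (∑ k ∈ Finset.range (K+1), M k) ^ stmt4β := by
  induction K with
  | zero => simp
  | succ K ih =>
    rw [Finset.sum_range_succ, Finset.sum_range_succ (f := M)]
    have hMsum : M 0 ≤ ∑ k ∈ Finset.range (K+1), M k := by
      have h1 : ({0} : Finset ℕ) ⊆ Finset.range (K+1) := by
        simp [Finset.singleton_subset_iff]
      have := Finset.sum_le_sum_of_subset_of_nonneg h1 (fun i _ _ => h0 i)
      simpa using this
    have hk := stmt4_key (h0 (K+1)) (le_trans (hle (K+1)) hMsum)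
    simp only [Nat.succ_ne_zero, if_false]
    linarith

lemma stmt4_Z_le (N : ℕ) : ∀ Λ : Finset (Fin N → ℕ),
    (∀ ν ∈ Λ, ∀ μ : Fin N → ℕ, (∀ n, μ n ≤ ν n) → μ ∈ Λ) →
    (∑ ν ∈ Λ, (2 : ℝ) ^ ((Finset.univ.filter fun n : Fin N => 1 ≤ ν n).card))
      ≤ (Λ.card : ℝ) ^ stmt4β := by
  induction N with
  | zero =>
    intro Λ _
    rcases Λ.eq_empty_or_nonempty with h | h
    · simp [h, Real.zero_rpow (ne_of_gt stmt4β_pos)]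
    · have hcard : Λ.card = 1 := le_antisymm
        (Finset.card_le_one.mpr (fun a _ b _ => Subsingleton.elim a b)) h.card_pos
      obtain ⟨x, hx⟩ := Finset.card_eq_one.mp hcard
      subst hx
      simp
  | succ N ih =>
    intro Λ hdc
    set K : ℕ := Λ.sup (fun ν => ν (Fin.last N)) with hK
    set T : ℕ → Finset (Fin (N+1) → ℕ) :=
      fun k => Λ.filter (fun ν => ν (Fin.last N) = k) with hT
    set L : ℕ → Finset (Fin N → ℕ) := fun k => (T k).image Fin.init with hL
    have hmap : ∀ ν ∈ Λ, ν (Fin.last N) ∈ Finset.range (K+1) :=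
      fun ν hν => Finset.mem_range.mpr (Nat.lt_succ_of_le (Finset.le_sup (f := fun ν => ν (Fin.last N)) hν))
    -- supp card splits
    have hcardsupp : ∀ ν : Fin (N+1) → ℕ,
        (Finset.univ.filter fun n : Fin (N+1) => 1 ≤ ν n).card
          = (Finset.univ.filter fun n : Fin N => 1 ≤ Fin.init ν n).card
            + (if 1 ≤ ν (Fin.last N) then 1 else 0) := by
      intro ν
      rw [Finset.card_filter, Finset.card_filter, Fin.sum_univ_castSucc]
      rfl
    -- membership in L k is lower-closed etc.
    have hLmem : ∀ k (μ : Fin N → ℕ), μ ∈ L k ↔ Fin.snoc μ k ∈ Λ := by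
      intro k μ
      constructor
      · rintro hμ
        simp only [hL, Finset.mem_image, hT, Finset.mem_filter] at hμ
        obtain ⟨ν, ⟨hν, hlast⟩, hinit⟩ := hμ
        apply hdc ν hν
        intro n
        refine Fin.lastCases ?_ ?_ n
        · simp [Fin.snoc_last, hlast]
        · intro i
          simp only [Fin.snoc_castSucc]
          rw [← hinit]
          exact le_rfl
      · intro h
        simp only [hL, Finset.mem_image, hT, Finset.mem_filter]
        exact ⟨Fin.snoc μ k, ⟨h, by simp⟩, by simp⟩
    have hLdc : ∀ k, ∀ μ' ∈ L k, ∀ μ : Fin N → ℕ, (∀ n, μ n ≤ μ' n) → μ ∈ L k := by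
      intro k μ' hμ' μ hle
      rw [hLmem] at hμ' ⊢
      apply hdc _ hμ'
      intro n
      refine Fin.lastCases ?_ ?_ n
      · simp
      · intro i; simpa using hle i
    have hLsub : ∀ k, L k ⊆ L 0 := by
      intro k μ hμ
      rw [hLmem] at hμ ⊢
      apply hdc _ hμ
      intro n
      refine Fin.lastCases ?_ ?_ n
      · simp
      · intro i; simp
    -- inner sum identity
    have hinj : ∀ k, Set.InjOn Fin.init (T k : Set (Fin (N+1) → ℕ)) := by
      intro k a ha b hb hab
      simp only [hT, Finset.coe_filter, Set.mem_setOf_eq] at ha hb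
      rw [← Fin.snoc_init_self a, ← Fin.snoc_init_self b, hab, ha.2, hb.2]
    have hinner : ∀ k, (∑ ν ∈ T k, (2 : ℝ) ^ ((Finset.univ.filter fun n : Fin (N+1) => 1 ≤ ν n).card))
        = (if k = 0 then 1 else 2) * ∑ μ ∈ L k, (2 : ℝ) ^ ((Finset.univ.filter fun n : Fin N => 1 ≤ μ n).card) := by
      intro k
      rw [hL, Finset.sum_image (fun a ha b hb hab => hinj k ha hb hab), Finset.mul_sum]
      apply Finset.sum_congr rfl
      intro ν hν
      have hlast : ν (Fin.last N) = k := (Finset.mem_filter.mp hν).2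
      rw [hcardsupp ν, pow_add, hlast, mul_comm]
      congr 1
      rcases Nat.eq_zero_or_pos k with h | h
      · simp [h]
      · simp [Nat.pos_iff_ne_zero.mp h, h]
    -- total card
    have hcardtot : (Λ.card : ℝ) = ∑ k ∈ Finset.range (K+1), ((L k).card : ℝ) := by
      have h1 : Λ.card = ∑ k ∈ Finset.range (K+1), (T k).card :=
        Finset.card_eq_sum_card_fiberwise hmap
      have h2 : ∀ k, (L k).card = (T k).card := fun k => Finset.card_image_of_injOn (hinj k)
      rw [h1]
      push_cast
      exact Finset.sum_congr rfl (fun k _ => by rw [h2])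
    -- assemble
    have hdecomp : (∑ ν ∈ Λ, (2 : ℝ) ^ ((Finset.univ.filter fun n : Fin (N+1) => 1 ≤ ν n).card))
        = ∑ k ∈ Finset.range (K+1), (if k = 0 then 1 else 2)
            * ∑ μ ∈ L k, (2 : ℝ) ^ ((Finset.univ.filter fun n : Fin N => 1 ≤ μ n).card) := by
      rw [← Finset.sum_fiberwise_of_maps_to hmap]
      exact Finset.sum_congr rfl (fun k _ => hinner k)
    rw [hdecomp, hcardtot]
    calc ∑ k ∈ Finset.range (K+1), (if k = 0 then 1 else 2)
            * ∑ μ ∈ L k, (2 : ℝ) ^ ((Finset.univ.filter fun n : Fin N => 1 ≤ μ n).card)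
        ≤ ∑ k ∈ Finset.range (K+1), (if k = 0 then 1 else 2) * ((L k).card : ℝ) ^ stmt4β := by
          apply Finset.sum_le_sum
          intro k _
          apply mul_le_mul_of_nonneg_left (ih (L k) (hLdc k))
          split <;> norm_num
      _ ≤ (∑ k ∈ Finset.range (K+1), ((L k).card : ℝ)) ^ stmt4β := by
          apply stmt4_agg
          · intro k; positivity
          · intro k; exact_mod_cast Finset.card_le_card (hLsub k)


/-- For a finite, nonempty, downward-closed set `Λ ⊂ ℕ^N`
with `M = #Λ`, one has `∑_{ν ∈ Λ} 2^{#{n : ν_n ≥ 1}} ≤ min(M^{log 3 / log 2}, 2^N · M)`.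
(The left-hand side is `Z(Λ)` for L²-normalized Chebyshev polynomials.) -/
theorem stmt_4 (N : ℕ) (hN : 1 ≤ N) (Λ : Finset (Fin N → ℕ)) (hne : Λ.Nonempty)
    (hdc : ∀ ν ∈ Λ, ∀ μ : Fin N → ℕ, (∀ n, μ n ≤ ν n) → μ ∈ Λ) :
    (∑ ν ∈ Λ, (2 : ℝ) ^ ((Finset.univ.filter fun n : Fin N => 1 ≤ ν n).card))
      ≤ min ((Λ.card : ℝ) ^ (Real.log 3 / Real.log 2)) ((2 : ℝ) ^ N * Λ.card) := by
  apply le_min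
  · have h1 := stmt4_Z_le N Λ hdc
    rwa [stmt4β] at h1
  · calc (∑ ν ∈ Λ, (2 : ℝ) ^ ((Finset.univ.filter fun n : Fin N => 1 ≤ ν n).card))
        ≤ ∑ _ν ∈ Λ, (2 : ℝ) ^ N := by
          apply Finset.sum_le_sum
          intro ν _
          apply pow_le_pow_right₀ (by norm_num)
          calc (Finset.univ.filter fun n : Fin N => 1 ≤ ν n).card
              ≤ (Finset.univ : Finset (Fin N)).card := Finset.card_filter_le _ _
            _ = N := by simp
      _ = (2 : ℝ) ^ N * Λ.card := by
          rw [Finset.sum_const, nsmul_eq_mul, mul_comm]
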